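/- If f and g are almost homomorphisms from ℤ to ℤ, then f ∘ g − g ∘ f has bounded range; i.e., composition of almost homomorphisms is commutative modulo bounded functions. -/
import Mathlib


/-- `f : ℤ → ℤ` is an almost homomorphism: `f (p+q) - f p - f q` has bounded range. -/
def AlmostHom (f : ℤ → ℤ) : Prop := ∃ C : ℤ, ∀ p q : ℤ, |f (p + q) - f p - f q| < C

/-- `f : ℤ → ℤ` has bounded range. -/
def Bdd (f : ℤ → ℤ) : Prop := ∃ C : ℤ, ∀ p : ℤ, |f p| < C

lemma ah_f0 (f : ℤ → ℤ) (C : ℤ) (h : ∀ p q : ℤ, |f (p + q) - f p - f q| < C) :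
    |f 0| < C := by
  have h0 := h 0 0
  have : f (0 + 0) - f 0 - f 0 = -(f 0) := by rw [zero_add]; ring
  rw [this, abs_neg] at h0
  exact h0

lemma ah_negpair (f : ℤ → ℤ) (C : ℤ) (h : ∀ p q : ℤ, |f (p + q) - f p - f q| < C) (x : ℤ) :
    |f (-x) + f x| < 2 * C := by
  have h1 := h x (-x)
  rw [add_neg_cancel] at h1
  have h0 := ah_f0 f C h
  have he : f (-x) + f x = -(f 0 - f x - f (-x)) + f 0 := by ring
  rw [he]
  calc |-(f 0 - f x - f (-x)) + f 0| ≤ |-(f 0 - f x - f (-x))| + |f 0| := abs_add_le _ _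
    _ = |f 0 - f x - f (-x)| + |f 0| := by rw [abs_neg]
    _ < 2 * C := by linarith

lemma ah_keyNat (f : ℤ → ℤ) (C : ℤ) (h : ∀ p q : ℤ, |f (p + q) - f p - f q| < C) (q : ℤ) :
    ∀ n : ℕ, |f ((n : ℤ) * q) - (n : ℤ) * f q| < ((n : ℤ) + 1) * C := by
  intro n
  induction n with
  | zero => simpa using ah_f0 f C h
  | succ n ih =>
    have ha : ((n + 1 : ℕ) : ℤ) * q = (n : ℤ) * q + q := by push_cast; ring
    rw [ha]
    have h1 := h ((n : ℤ) * q) q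
    have he : f ((n : ℤ) * q + q) - ((n + 1 : ℕ) : ℤ) * f q =
        (f ((n : ℤ) * q + q) - f ((n : ℤ) * q) - f q) + (f ((n : ℤ) * q) - (n : ℤ) * f q) := by
      push_cast; ring
    rw [he]
    calc |(f ((n : ℤ) * q + q) - f ((n : ℤ) * q) - f q) + (f ((n : ℤ) * q) - (n : ℤ) * f q)|
        ≤ |f ((n : ℤ) * q + q) - f ((n : ℤ) * q) - f q| + |f ((n : ℤ) * q) - (n : ℤ) * f q| :=
          abs_add_le _ _
      _ < (((n + 1 : ℕ) : ℤ) + 1) * C := by push_cast; linarith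

lemma ah_key (f : ℤ → ℤ) (C : ℤ) (h : ∀ p q : ℤ, |f (p + q) - f p - f q| < C) (q m : ℤ) :
    |f (m * q) - m * f q| < (|m| + 3) * C := by
  have hC : 0 < C := lt_of_le_of_lt (abs_nonneg _) (ah_f0 f C h)
  rcases Int.natAbs_eq m with hm | hm
  · rw [hm]
    have h1 := ah_keyNat f C h q m.natAbs
    have habs : |(m.natAbs : ℤ)| = (m.natAbs : ℤ) := abs_of_nonneg (Int.natCast_nonneg _)
    rw [habs]
    linarith
  · rw [hm]
    set n : ℤ := (m.natAbs : ℤ) with hn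
    have hn0 : 0 ≤ n := Int.natCast_nonneg _
    have h1 := ah_keyNat f C h q m.natAbs
    rw [← hn] at h1
    have h2 := ah_negpair f C h (n * q)
    have harg : -n * q = -(n * q) := neg_mul n q
    rw [harg]
    have he : f (-(n * q)) - -n * f q =
        (f (-(n * q)) + f (n * q)) + -(f (n * q) - n * f q) := by ring
    rw [he]
    have habs : |(-n : ℤ)| = n := by rw [abs_neg, abs_of_nonneg hn0]
    rw [habs]
    calc |(f (-(n * q)) + f (n * q)) + -(f (n * q) - n * f q)|
        ≤ |f (-(n * q)) + f (n * q)| + |-(f (n * q) - n * f q)| := abs_add_le _ _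
      _ = |f (-(n * q)) + f (n * q)| + |f (n * q) - n * f q| := by rw [abs_neg]
      _ < (n + 3) * C := by linarith

lemma ah_growth (g : ℤ → ℤ) (C : ℤ) (h : ∀ p q : ℤ, |g (p + q) - g p - g q| < C) (p : ℤ) :
    |g p| ≤ (|g 1| + C) * |p| + 3 * C := by
  have h1 := ah_key g C h 1 p
  rw [mul_one] at h1
  have h2 : |g p| - |p * g 1| ≤ |g p - p * g 1| := abs_sub_abs_le_abs_sub _ _
  have h3 : |p * g 1| = |p| * |g 1| := abs_mul _ _
  have hp : 0 ≤ |p| := abs_nonneg p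
  nlinarith

/-- Composition of almost homomorphisms is commutative modulo bounded functions. -/
theorem almostHom_comp_comm_mod_bdd (f g : ℤ → ℤ) (hf : AlmostHom f) (hg : AlmostHom g) :
    Bdd (f ∘ g - g ∘ f) := by
  obtain ⟨Cf, hf⟩ := hf
  obtain ⟨Cg, hg⟩ := hg
  have hCf : 0 < Cf := lt_of_le_of_lt (abs_nonneg _) (ah_f0 f Cf hf)
  have hCg : 0 < Cg := lt_of_le_of_lt (abs_nonneg _) (ah_f0 g Cg hg)
  set Gf : ℤ := |f 1| + Cf with hGf
  set Gg : ℤ := |g 1| + Cg with hGg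
  have hGf0 : 0 ≤ Gf := by have := abs_nonneg (f 1); linarith
  have hGg0 : 0 ≤ Gg := by have := abs_nonneg (g 1); linarith
  set K : ℤ := Cf + Gg * Cf + Cg + Gf * Cg with hK
  set K' : ℤ := 3 * Cf + (3 * Cg + 3) * Cf + 3 * Cg + (3 * Cf + 3) * Cg with hK'
  have hK0 : 0 ≤ K := by positivity
  have hK'0 : 0 ≤ K' := by positivity
  set D : ℤ → ℤ := fun p => f (g p) - g (f p) with hD
  have main : ∀ p : ℤ, |p * D p| < K * |p| + K' := by
    intro p
    have a1 := ah_key f Cf hf (g p) p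
    have a2 := ah_key f Cf hf p (g p)
    rw [mul_comm (g p) p] at a2
    have b1 := ah_key g Cg hg (f p) p
    have b2 := ah_key g Cg hg p (f p)
    rw [mul_comm (f p) p] at b2
    have gr1 := ah_growth g Cg hg p
    have gr2 := ah_growth f Cf hf p
    have hp : 0 ≤ |p| := abs_nonneg p
    have he : p * D p =
        (f (p * g p) - g p * f (g p) * 0 - g p * f p) - (f (p * g p) - p * f (g p))
        - ((g (p * f p) - f p * g p) - (g (p * f p) - p * g (f p))) := by
      simp only [hD]; ring
    obtain ⟨a1l, a1r⟩ := abs_lt.mp a1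
    obtain ⟨a2l, a2r⟩ := abs_lt.mp a2
    obtain ⟨b1l, b1r⟩ := abs_lt.mp b1
    obtain ⟨b2l, b2r⟩ := abs_lt.mp b2
    rw [abs_lt]
    constructor
    · rw [he]; nlinarith
    · rw [he]; nlinarith
  refine ⟨K + K' + |D 0| + 1, fun p => ?_⟩
  have hval : (f ∘ g - g ∘ f) p = D p := by simp [hD]
  rw [hval]
  rcases eq_or_ne p 0 with hp0 | hp0
  · rw [hp0]
    have := abs_nonneg (D 0)
    linarith
  · have hp1 : 1 ≤ |p| := Int.one_le_abs (by simpa using hp0)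
    have hm := main p
    have hmul : |p| * |D p| = |p * D p| := (abs_mul p (D p)).symm
    have h2 : |p| * |D p| < (K + K') * |p| := by
      have : K' * 1 ≤ K' * |p| := mul_le_mul_of_nonneg_left hp1 hK'0
      rw [hmul]; nlinarith
    have h3 : |D p| < K + K' := by
      rw [mul_comm] at h2
      exact lt_of_mul_lt_mul_right h2 (abs_nonneg p)
    have := abs_nonneg (D 0)
    linarith
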